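/- Let M₁, M₂ ∈ ℕ with M₁, M₂ ≥ 2, set M := M₁·M₂, and let μ₁, μ₂ ∈ ℝ. For r = 1, 2 let a⁽ʳ⁾ ∈ ℂ^{M_r} be the ULA steering vector with entries a⁽ʳ⁾_m = exp(i·m·μ_r) for m = 0,…,M_r−1, let a := a⁽¹⁾ ⊗ a⁽²⁾ ∈ ℂ^M (Kronecker product), and let J₁⁽ʳ⁾, J₂⁽ʳ⁾ ∈ ℂ^{(M_r−1)×M_r} be the maximum-overlap selection matrices ((J₁⁽ʳ⁾)_{k,m} = 1 iff m = k, (J₂⁽ʳ⁾)_{k,m} = 1 iff m = k+1). Define the 2-D selection matrices J̃_ℓ⁽¹⁾ := J_ℓ⁽¹⁾ ⊗ I_{M₂} and J̃_ℓ⁽²⁾ := I_{M₁} ⊗ J_ℓ⁽²⁾ for ℓ = 1, 2, and for r = 1, 2 the row vector ã⁽ʳ⁾ᵀ := (√M·M_r/(M·(M_r−1))) · aᴴ·(J̃₁⁽ʳ⁾)ᴴ · (e^{−iμ_r}·J̃₂⁽ʳ⁾ − J̃₁⁽ʳ⁾) · (I_M − (1/M)·a·aᴴ). Then ‖ã⁽ʳ⁾‖²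 = 2·M_r/(M_r−1)² for r = 1, 2. Consequently, for any nonzero s ∈ ℂ^N and σ ∈ ℝ, the first-order total mean square error of 2-D Standard ESPRIT for a single source, (σ²/2)·(1/(M·‖s‖²))·(‖ã⁽¹⁾‖² + ‖ã⁽²⁾‖²), equals (σ²/‖s‖²)·( 1/((M₁−1)²·M₂) + 1/(M₁·(M₂−1)²) ). -/

import Mathlib

open Matrix BigOperators Kronecker

namespace TwoDHelp

lemma kron_mulVec {p q r t : ℕ} (A : Matrix (Fin p) (Fin q) ℂ) (B : Matrix (Fin r) (Fin t) ℂ)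
    (x : Fin q → ℂ) (y : Fin t → ℂ) :
    (A ⊗ₖ B) *ᵥ (fun m => x m.1 * y m.2) = fun k => (A *ᵥ x) k.1 * (B *ᵥ y) k.2 := by
  funext k
  simp only [mulVec, dotProduct, kroneckerMap_apply, Fintype.sum_prod_type]
  rw [Finset.sum_mul_sum]
  apply Finset.sum_congr rfl; intro i _
  apply Finset.sum_congr rfl; intro j _
  ring

lemma vecMul_kron {p q r t : ℕ} (A : Matrix (Fin p) (Fin q) ℂ) (B : Matrix (Fin r) (Fin t) ℂ)
    (x : Fin p → ℂ) (y : Fin r → ℂ) :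
    (fun m : Fin p × Fin r => x m.1 * y m.2) ᵥ* (A ⊗ₖ B) = fun k => (x ᵥ* A) k.1 * (y ᵥ* B) k.2 := by
  funext k
  simp only [vecMul, dotProduct, kroneckerMap_apply, Fintype.sum_prod_type]
  rw [Finset.sum_mul_sum]
  apply Finset.sum_congr rfl; intro i _
  apply Finset.sum_congr rfl; intro j _
  ring

lemma smul_sub_kron {p q r : ℕ} (c : ℂ) (A B : Matrix (Fin p) (Fin q) ℂ)
    (C : Matrix (Fin r) (Fin r) ℂ) :
    c • (A ⊗ₖ C) - B ⊗ₖ C = (c • A - B) ⊗ₖ C := by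
  ext ⟨i1, i2⟩ ⟨j1, j2⟩
  simp only [Matrix.sub_apply, Matrix.smul_apply, kroneckerMap_apply, smul_eq_mul]
  ring

lemma kron_smul_sub {p q r : ℕ} (c : ℂ) (A B : Matrix (Fin p) (Fin q) ℂ)
    (C : Matrix (Fin r) (Fin r) ℂ) :
    c • (C ⊗ₖ A) - C ⊗ₖ B = C ⊗ₖ (c • A - B) := by
  ext ⟨i1, i2⟩ ⟨j1, j2⟩
  simp only [Matrix.sub_apply, Matrix.smul_apply, kroneckerMap_apply, smul_eq_mul]
  ring

lemma vecMul_proj {n : Type*} [Fintype n] [DecidableEq n] (v a : n → ℂ) (c : ℂ)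
    (h : v ⬝ᵥ a = 0) :
    v ᵥ* ((1 : Matrix n n ℂ) - c • vecMulVec a (star a)) = v := by
  funext m
  have expand : ∀ k, v k * ((1 : Matrix n n ℂ) - c • vecMulVec a (star a)) k m
      = (if k = m then v k else 0) - c * (v k * a k) * star (a m) := by
    intro k
    by_cases hk : k = m <;>
      simp [Matrix.sub_apply, Matrix.one_apply, vecMulVec_apply, hk, mul_sub] <;> ring
  simp only [vecMul, dotProduct, expand, Finset.sum_sub_distrib, Finset.sum_ite_eq',
    Finset.mem_univ, if_true]
  have : ∑ k, c * (v k * a k) * star (a m) = c * (v ⬝ᵥ a) * star (a m) := by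
    simp [dotProduct, Finset.sum_mul, Finset.mul_sum]
  rw [this, h]
  simp

lemma sum_ite_nat (M j : ℕ) (h : j < M) :
    (∑ m : Fin M, if (m : ℕ) = j then (1 : ℝ) else 0) = 1 := by
  rw [Finset.sum_eq_single (⟨j, h⟩ : Fin M)]
  · simp
  · intro b _ hb
    rw [if_neg]
    simpa [Fin.ext_iff] using hb
  · intro h'; exact absurd (Finset.mem_univ _) h'

lemma sum_ite_nat_c (M j : ℕ) (h : j < M) :
    (∑ m : Fin M, if (m : ℕ) = j then (1 : ℂ) else 0) = 1 := by
  rw [Finset.sum_eq_single (⟨j, h⟩ : Fin M)]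
  · simp
  · intro b _ hb
    rw [if_neg]
    simpa [Fin.ext_iff] using hb
  · intro h'; exact absurd (Finset.mem_univ _) h'

lemma unit_norm (M : ℕ) (μ : ℝ) (a : Fin M → ℂ)
    (ha : ∀ m, a m = Complex.exp (Complex.I * ((m : ℕ) : ℂ) * (μ : ℂ))) (m : Fin M) :
    ‖a m‖ = 1 := by
  rw [ha]
  have : (Complex.I * ((m : ℕ) : ℂ) * (μ : ℝ)).re = 0 := by simp [Complex.mul_re, Complex.mul_im]
  rw [Complex.norm_exp, this, Real.exp_zero]

lemma star_mul_self (M : ℕ) (μ : ℝ) (a : Fin M → ℂ)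
    (ha : ∀ m, a m = Complex.exp (Complex.I * ((m : ℕ) : ℂ) * (μ : ℂ))) (m : Fin M) :
    star (a m) * a m = 1 := by
  rw [ha, Complex.star_def, ← Complex.exp_conj, ← Complex.exp_add]
  rw [show (starRingEnd ℂ) (Complex.I * ((m : ℕ) : ℂ) * (μ : ℝ)) = -(Complex.I * ((m : ℕ) : ℂ) * (μ : ℝ)) by
    simp only [_root_.map_mul, Complex.conj_I, Complex.conj_natCast, Complex.conj_ofReal]
    ring]
  simp

lemma oneD_row (M : ℕ) (hM : 2 ≤ M) (μ : ℝ) (a : Fin M → ℂ)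
    (ha : ∀ m, a m = Complex.exp (Complex.I * ((m : ℕ) : ℂ) * (μ : ℂ)))
    (J1 J2 : Matrix (Fin (M - 1)) (Fin M) ℂ)
    (hJ1 : ∀ k m, J1 k m = if (m : ℕ) = (k : ℕ) then 1 else 0)
    (hJ2 : ∀ k m, J2 k m = if (m : ℕ) = (k : ℕ) + 1 then 1 else 0) :
    star (J1 *ᵥ a) ᵥ* (Complex.exp (-(Complex.I * (μ : ℂ))) • J2 - J1)
      = fun m : Fin M => ((if (m : ℕ) = M - 1 then 1 else 0) - (if (m : ℕ) = 0 then 1 else 0)) * star (a m) := by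
  have hb : ∀ k : Fin (M - 1), (J1 *ᵥ a) k = a ⟨k.1, by omega⟩ := by
    intro k
    simp only [mulVec, dotProduct, hJ1, ite_mul, one_mul, zero_mul]
    rw [Finset.sum_eq_single (⟨k.1, by omega⟩ : Fin M)]
    · simp
    · intro b _ hb
      rw [if_neg]
      simpa [Fin.ext_iff] using hb
    · intro h'; exact absurd (Finset.mem_univ _) h'
  have key : ∀ (j : Fin M) (k : Fin M), (j : ℕ) + 1 = (k : ℕ) →
      Complex.exp (-(Complex.I * (μ : ℂ))) * star (a j) = star (a k) := by
    intro j k hjk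
    have hc : ((k : ℕ) : ℂ) = ((j : ℕ) : ℂ) + 1 := by rw [← hjk]; push_cast; ring
    rw [ha, ha, Complex.star_def, ← Complex.exp_conj, ← Complex.exp_conj, ← Complex.exp_add]
    congr 1
    simp only [_root_.map_mul, Complex.conj_I, Complex.conj_natCast, Complex.conj_ofReal]
    rw [hc]
    ring
  funext m
  simp only [vecMul, dotProduct, Pi.star_apply, hb, Matrix.sub_apply, Matrix.smul_apply, hJ2,
    hJ1, smul_eq_mul]
  have expand : ∀ k : Fin (M - 1),
      star (a ⟨k.1, by omega⟩) *
        (Complex.exp (-(Complex.I * (μ : ℂ))) * (if (m : ℕ) = (k : ℕ) + 1 then 1 else 0)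
          - (if (m : ℕ) = (k : ℕ) then 1 else 0))
      = Complex.exp (-(Complex.I * (μ : ℂ))) * star (a ⟨k.1, by omega⟩) *
          (if (m : ℕ) = (k : ℕ) + 1 then 1 else 0)
        - star (a ⟨k.1, by omega⟩) * (if (m : ℕ) = (k : ℕ) then 1 else 0) := by
    intro k; ring
  rw [Finset.sum_congr rfl (fun k _ => expand k), Finset.sum_sub_distrib]
  have hS2 : (∑ k : Fin (M - 1), star (a ⟨k.1, by omega⟩) * (if (m : ℕ) = (k : ℕ) then 1 else 0))
      = if (m : ℕ) < M - 1 then star (a m) else 0 := by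
    by_cases hm : (m : ℕ) < M - 1
    · rw [if_pos hm, Finset.sum_eq_single (⟨(m : ℕ), hm⟩ : Fin (M - 1))]
      · simp
      · intro b _ hb'
        rw [if_neg, mul_zero]
        simpa [Fin.ext_iff, eq_comm] using hb'
      · intro h'; exact absurd (Finset.mem_univ _) h'
    · rw [if_neg hm]
      apply Finset.sum_eq_zero
      intro k _
      rw [if_neg, mul_zero]
      have := k.2; omega
  have hS1 : (∑ k : Fin (M - 1), Complex.exp (-(Complex.I * (μ : ℂ))) * star (a ⟨k.1, by omega⟩)
        * (if (m : ℕ) = (k : ℕ) + 1 then 1 else 0))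
      = if (m : ℕ) = 0 then 0 else star (a m) := by
    by_cases hm : (m : ℕ) = 0
    · rw [if_pos hm]
      apply Finset.sum_eq_zero
      intro k _
      rw [if_neg, mul_zero]
      omega
    · rw [if_neg hm]
      have hlt : (m : ℕ) - 1 < M - 1 := by have := m.2; omega
      rw [Finset.sum_eq_single (⟨(m : ℕ) - 1, hlt⟩ : Fin (M - 1))]
      · rw [if_pos (show (m : ℕ) = ((m : ℕ) - 1) + 1 by omega), mul_one]
        exact key ⟨(m : ℕ) - 1, by omega⟩ m (show ((m : ℕ) - 1) + 1 = (m : ℕ) by omega)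
      · intro b _ hb'
        rw [if_neg, mul_zero]
        have hbv : (b : ℕ) ≠ (m : ℕ) - 1 := by simpa [Fin.ext_iff] using hb'
        omega
      · intro h'; exact absurd (Finset.mem_univ _) h'
  rw [hS1, hS2]
  have hm2 := m.2
  split_ifs
  all_goals first
  | (exfalso; omega)
  | ring

end TwoDHelp

open TwoDHelp

set_option maxHeartbeats 1000000 in
theorem twoD_esprit_single_source_mse
    (M₁ M₂ : ℕ) (h1 : 2 ≤ M₁) (h2 : 2 ≤ M₂) (μ₁ μ₂ : ℝ)
    (N : ℕ) (hN : 1 ≤ N) (s : Fin N → ℂ) (hs : s ≠ 0) (σ : ℝ)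
    (a1 : Fin M₁ → ℂ) (a2 : Fin M₂ → ℂ)
    (ha1 : ∀ m, a1 m = Complex.exp (Complex.I * ((m : ℕ) : ℂ) * (μ₁ : ℂ)))
    (ha2 : ∀ m, a2 m = Complex.exp (Complex.I * ((m : ℕ) : ℂ) * (μ₂ : ℂ)))
    (a : Fin M₁ × Fin M₂ → ℂ) (ha : ∀ m, a m = a1 m.1 * a2 m.2)
    (J11 J21 : Matrix (Fin (M₁ - 1)) (Fin M₁) ℂ)
    (hJ11 : ∀ k m, J11 k m = if (m : ℕ) = (k : ℕ) then 1 else 0)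
    (hJ21 : ∀ k m, J21 k m = if (m : ℕ) = (k : ℕ) + 1 then 1 else 0)
    (J12 J22 : Matrix (Fin (M₂ - 1)) (Fin M₂) ℂ)
    (hJ12 : ∀ k m, J12 k m = if (m : ℕ) = (k : ℕ) then 1 else 0)
    (hJ22 : ∀ k m, J22 k m = if (m : ℕ) = (k : ℕ) + 1 then 1 else 0)
    (atilde1 : Fin M₁ × Fin M₂ → ℂ)
    (hat1 : atilde1 =
      ((Real.sqrt ((M₁ : ℝ) * M₂) * (M₁ : ℝ) /
          (((M₁ : ℝ) * M₂) * ((M₁ : ℝ) - 1)) : ℝ) : ℂ) •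
        (star ((J11 ⊗ₖ (1 : Matrix (Fin M₂) (Fin M₂) ℂ)) *ᵥ a) ᵥ*
          ((Complex.exp (-(Complex.I * (μ₁ : ℂ))) •
              (J21 ⊗ₖ (1 : Matrix (Fin M₂) (Fin M₂) ℂ)) -
              J11 ⊗ₖ (1 : Matrix (Fin M₂) (Fin M₂) ℂ)) *
            ((1 : Matrix (Fin M₁ × Fin M₂) (Fin M₁ × Fin M₂) ℂ) -
              (((M₁ : ℕ) * M₂ : ℕ) : ℂ)⁻¹ • vecMulVec a (star a)))))
    (atilde2 : Fin M₁ × Fin M₂ → ℂ)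
    (hat2 : atilde2 =
      ((Real.sqrt ((M₁ : ℝ) * M₂) * (M₂ : ℝ) /
          (((M₁ : ℝ) * M₂) * ((M₂ : ℝ) - 1)) : ℝ) : ℂ) •
        (star (((1 : Matrix (Fin M₁) (Fin M₁) ℂ) ⊗ₖ J12) *ᵥ a) ᵥ*
          ((Complex.exp (-(Complex.I * (μ₂ : ℂ))) •
              ((1 : Matrix (Fin M₁) (Fin M₁) ℂ) ⊗ₖ J22) -
              (1 : Matrix (Fin M₁) (Fin M₁) ℂ) ⊗ₖ J12) *
            ((1 : Matrix (Fin M₁ × Fin M₂) (Fin M₁ × Fin M₂) ℂ) -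
              (((M₁ : ℕ) * M₂ : ℕ) : ℂ)⁻¹ • vecMulVec a (star a))))) :
    ∑ m, ‖atilde1 m‖ ^ 2 = 2 * (M₁ : ℝ) / ((M₁ : ℝ) - 1) ^ 2 ∧
    ∑ m, ‖atilde2 m‖ ^ 2 = 2 * (M₂ : ℝ) / ((M₂ : ℝ) - 1) ^ 2 ∧
    (σ ^ 2 / 2) * (1 / (((M₁ : ℝ) * M₂) * (∑ i, ‖s i‖ ^ 2))) *
        (∑ m, ‖atilde1 m‖ ^ 2 + ∑ m, ‖atilde2 m‖ ^ 2) =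
      (σ ^ 2 / (∑ i, ‖s i‖ ^ 2)) *
        (1 / (((M₁ : ℝ) - 1) ^ 2 * (M₂ : ℝ)) + 1 / ((M₁ : ℝ) * ((M₂ : ℝ) - 1) ^ 2)) := by
  -- basic numeric facts
  have hM1R : (2 : ℝ) ≤ (M₁ : ℝ) := by exact_mod_cast h1
  have hM2R : (2 : ℝ) ≤ (M₂ : ℝ) := by exact_mod_cast h2
  have hM1ne : (M₁ : ℝ) ≠ 0 := by linarith
  have hM2ne : (M₂ : ℝ) ≠ 0 := by linarith
  have hM1s : (M₁ : ℝ) - 1 ≠ 0 := by linarith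
  have hM2s : (M₂ : ℝ) - 1 ≠ 0 := by linarith
  have hsq : Real.sqrt ((M₁ : ℝ) * M₂) ^ 2 = (M₁ : ℝ) * M₂ :=
    Real.sq_sqrt (by positivity)
  set c1 : ℝ := Real.sqrt ((M₁ : ℝ) * M₂) * (M₁ : ℝ) / (((M₁ : ℝ) * M₂) * ((M₁ : ℝ) - 1)) with hc1
  set c2 : ℝ := Real.sqrt ((M₁ : ℝ) * M₂) * (M₂ : ℝ) / (((M₁ : ℝ) * M₂) * ((M₂ : ℝ) - 1)) with hc2
  -- the steering-vector function form
  have haf : a = fun m => a1 m.1 * a2 m.2 := funext ha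
  -- atilde1 explicit
  have hb1 : (J11 ⊗ₖ (1 : Matrix (Fin M₂) (Fin M₂) ℂ)) *ᵥ a
      = fun k => (J11 *ᵥ a1) k.1 * a2 k.2 := by
    rw [haf, kron_mulVec]
    funext k
    rw [one_mulVec]
  have hsb1 : star ((J11 ⊗ₖ (1 : Matrix (Fin M₂) (Fin M₂) ℂ)) *ᵥ a)
      = fun k : Fin (M₁ - 1) × Fin M₂ => star (J11 *ᵥ a1) k.1 * star a2 k.2 := by
    rw [hb1]
    funext k
    simp [star_mul']
  have hA1 : atilde1 = fun m : Fin M₁ × Fin M₂ =>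
      ((c1 : ℝ) : ℂ) * ((((if ((m.1 : ℕ)) = M₁ - 1 then (1 : ℂ) else 0) -
        (if ((m.1 : ℕ)) = 0 then 1 else 0)) * star (a1 m.1)) * star a2 m.2) := by
    rw [hat1, ← Matrix.vecMul_vecMul, smul_sub_kron, hsb1,
      vecMul_kron (Complex.exp (-(Complex.I * (μ₁ : ℂ))) • J21 - J11)
        (1 : Matrix (Fin M₂) (Fin M₂) ℂ) (star (J11 *ᵥ a1)) (star a2),
      oneD_row M₁ h1 μ₁ a1 ha1 J11 J21 hJ11 hJ21, vecMul_one, vecMul_proj]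
    · rfl
    · -- orthogonality
      have h0 : (∑ m1 : Fin M₁, (((if ((m1 : ℕ)) = M₁ - 1 then (1 : ℂ) else 0) -
          (if ((m1 : ℕ)) = 0 then 1 else 0)) * star (a1 m1)) * a1 m1) = 0 := by
        rw [Finset.sum_congr rfl (fun m1 _ => by
          rw [mul_assoc, star_mul_self M₁ μ₁ a1 ha1 m1, mul_one])]
        rw [Finset.sum_sub_distrib, sum_ite_nat_c M₁ (M₁ - 1) (by omega),
          sum_ite_nat_c M₁ 0 (by omega), sub_self]
      simp only [dotProduct, Fintype.sum_prod_type, haf]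
      rw [Finset.sum_congr rfl (fun m1 _ => Finset.sum_congr rfl (fun m2 _ => by
        show _ = ((((if ((m1 : ℕ)) = M₁ - 1 then (1 : ℂ) else 0) -
          (if ((m1 : ℕ)) = 0 then 1 else 0)) * star (a1 m1)) * a1 m1) * (star (a2 m2) * a2 m2)
        simp only [Pi.star_apply]
        ring))]
      rw [← Finset.sum_mul_sum, h0, zero_mul]
  -- atilde2 explicit
  have hb2 : ((1 : Matrix (Fin M₁) (Fin M₁) ℂ) ⊗ₖ J12) *ᵥ a
      = fun k => a1 k.1 * (J12 *ᵥ a2) k.2 := by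
    rw [haf, kron_mulVec]
    funext k
    rw [one_mulVec]
  have hsb2 : star (((1 : Matrix (Fin M₁) (Fin M₁) ℂ) ⊗ₖ J12) *ᵥ a)
      = fun k : Fin M₁ × Fin (M₂ - 1) => star a1 k.1 * star (J12 *ᵥ a2) k.2 := by
    rw [hb2]
    funext k
    simp [star_mul']
  have hA2 : atilde2 = fun m : Fin M₁ × Fin M₂ =>
      ((c2 : ℝ) : ℂ) * (star a1 m.1 * ((((if ((m.2 : ℕ)) = M₂ - 1 then (1 : ℂ) else 0) -
        (if ((m.2 : ℕ)) = 0 then 1 else 0)) * star (a2 m.2)))) := by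
    rw [hat2, ← Matrix.vecMul_vecMul, kron_smul_sub, hsb2,
      vecMul_kron (1 : Matrix (Fin M₁) (Fin M₁) ℂ)
        (Complex.exp (-(Complex.I * (μ₂ : ℂ))) • J22 - J12) (star a1) (star (J12 *ᵥ a2)),
      oneD_row M₂ h2 μ₂ a2 ha2 J12 J22 hJ12 hJ22, vecMul_one, vecMul_proj]
    · rfl
    · have h0 : (∑ m2 : Fin M₂, (((if ((m2 : ℕ)) = M₂ - 1 then (1 : ℂ) else 0) -
          (if ((m2 : ℕ)) = 0 then 1 else 0)) * star (a2 m2)) * a2 m2) = 0 := by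
        rw [Finset.sum_congr rfl (fun m2 _ => by
          rw [mul_assoc, star_mul_self M₂ μ₂ a2 ha2 m2, mul_one])]
        rw [Finset.sum_sub_distrib, sum_ite_nat_c M₂ (M₂ - 1) (by omega),
          sum_ite_nat_c M₂ 0 (by omega), sub_self]
      simp only [dotProduct, Fintype.sum_prod_type, haf]
      rw [Finset.sum_congr rfl (fun m1 _ => Finset.sum_congr rfl (fun m2 _ => by
        show _ = (star (a1 m1) * a1 m1) * ((((if ((m2 : ℕ)) = M₂ - 1 then (1 : ℂ) else 0) -
          (if ((m2 : ℕ)) = 0 then 1 else 0)) * star (a2 m2)) * a2 m2)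
        simp only [Pi.star_apply]
        ring))]
      rw [← Finset.sum_mul_sum, Finset.sum_congr rfl
        (fun m1 _ => star_mul_self M₁ μ₁ a1 ha1 m1), h0, mul_zero]
  -- norms of the if-differences
  have hd1 : ∀ m1 : Fin M₁, ‖((if ((m1 : ℕ)) = M₁ - 1 then (1 : ℂ) else 0) -
      (if ((m1 : ℕ)) = 0 then 1 else 0))‖ ^ 2
      = (if ((m1 : ℕ)) = M₁ - 1 then (1 : ℝ) else 0) + (if ((m1 : ℕ)) = 0 then 1 else 0) := by
    intro m1
    by_cases hX : (m1 : ℕ) = M₁ - 1 <;> by_cases hY : (m1 : ℕ) = 0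
    · exfalso; omega
    · rw [if_pos hX, if_neg hY, if_pos hX, if_neg hY, sub_zero, norm_one, one_pow]; ring
    · rw [if_neg hX, if_pos hY, if_neg hX, if_pos hY, zero_sub, norm_neg, norm_one, one_pow]; ring
    · rw [if_neg hX, if_neg hY, if_neg hX, if_neg hY, sub_zero, norm_zero]; ring
  have hd2 : ∀ m2 : Fin M₂, ‖((if ((m2 : ℕ)) = M₂ - 1 then (1 : ℂ) else 0) -
      (if ((m2 : ℕ)) = 0 then 1 else 0))‖ ^ 2
      = (if ((m2 : ℕ)) = M₂ - 1 then (1 : ℝ) else 0) + (if ((m2 : ℕ)) = 0 then 1 else 0) := by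
    intro m2
    by_cases hX : (m2 : ℕ) = M₂ - 1 <;> by_cases hY : (m2 : ℕ) = 0
    · exfalso; omega
    · rw [if_pos hX, if_neg hY, if_pos hX, if_neg hY, sub_zero, norm_one, one_pow]; ring
    · rw [if_neg hX, if_pos hY, if_neg hX, if_pos hY, zero_sub, norm_neg, norm_one, one_pow]; ring
    · rw [if_neg hX, if_neg hY, if_neg hX, if_neg hY, sub_zero, norm_zero]; ring
  -- sum of squared norms of atilde1
  have hsum1 : ∑ m, ‖atilde1 m‖ ^ 2 = 2 * (M₁ : ℝ) / ((M₁ : ℝ) - 1) ^ 2 := by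
    have hnorm : ∀ (m1 : Fin M₁) (m2 : Fin M₂), ‖atilde1 (m1, m2)‖ ^ 2
        = c1 ^ 2 * ((if ((m1 : ℕ)) = M₁ - 1 then (1 : ℝ) else 0) +
            (if ((m1 : ℕ)) = 0 then 1 else 0)) := by
      intro m1 m2
      rw [hA1]
      simp only [Pi.star_apply, norm_mul, mul_pow, norm_star,
        unit_norm M₁ μ₁ a1 ha1 m1, unit_norm M₂ μ₂ a2 ha2 m2, one_pow, mul_one,
        Complex.norm_real, Real.norm_eq_abs, sq_abs, hd1 m1]
    rw [Fintype.sum_prod_type,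
      Finset.sum_congr rfl (fun m1 _ => Finset.sum_congr rfl (fun m2 _ => hnorm m1 m2)),
      Finset.sum_congr rfl (fun m1 _ => by
        rw [Finset.sum_const, Finset.card_univ, Fintype.card_fin, nsmul_eq_mul]),
      ← Finset.mul_sum, ← Finset.mul_sum,
      Finset.sum_add_distrib, sum_ite_nat M₁ (M₁ - 1) (by omega),
      sum_ite_nat M₁ 0 (by omega), hc1, div_pow, mul_pow, hsq]
    field_simp
    ring
  have hsum2 : ∑ m, ‖atilde2 m‖ ^ 2 = 2 * (M₂ : ℝ) / ((M₂ : ℝ) - 1) ^ 2 := by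
    have hnorm : ∀ (m1 : Fin M₁) (m2 : Fin M₂), ‖atilde2 (m1, m2)‖ ^ 2
        = c2 ^ 2 * ((if ((m2 : ℕ)) = M₂ - 1 then (1 : ℝ) else 0) +
            (if ((m2 : ℕ)) = 0 then 1 else 0)) := by
      intro m1 m2
      rw [hA2]
      simp only [Pi.star_apply, norm_mul, mul_pow, norm_star,
        unit_norm M₁ μ₁ a1 ha1 m1, unit_norm M₂ μ₂ a2 ha2 m2, one_pow, one_mul, mul_one,
        Complex.norm_real, Real.norm_eq_abs, sq_abs, hd2 m2]
    rw [Fintype.sum_prod_type,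
      Finset.sum_congr rfl (fun m1 _ => Finset.sum_congr rfl (fun m2 _ => hnorm m1 m2)),
      Finset.sum_congr rfl (fun m1 _ => by
        rw [← Finset.mul_sum, Finset.sum_add_distrib, sum_ite_nat M₂ (M₂ - 1) (by omega),
          sum_ite_nat M₂ 0 (by omega)]),
      Finset.sum_const, Finset.card_univ, Fintype.card_fin, nsmul_eq_mul,
      hc2, div_pow, mul_pow, hsq]
    field_simp
    ring
  refine ⟨hsum1, hsum2, ?_⟩
  rw [hsum1, hsum2]
  set T := ∑ i, ‖s i‖ ^ 2 with hTdef
  have hT : 0 < T := by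
    rw [hTdef]
    obtain ⟨i, hi⟩ := Function.ne_iff.mp hs
    have hnz : ‖s i‖ ≠ 0 := norm_ne_zero_iff.mpr hi
    exact Finset.sum_pos' (fun j _ => by positivity)
      ⟨i, Finset.mem_univ i, by positivity⟩
  have hTne : T ≠ 0 := ne_of_gt hT
  field_simp
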